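/- Let B be a C*-algebra, E a Hilbert B-module, and K a closed ternary ideal of E. Then x·⟨y,k⟩ ∈ K for all x, y ∈ E and k ∈ K, and k·⟨x,y⟩ ∈ K for all x, y ∈ E and k ∈ K. -/

import Mathlib

open scoped RightActions

/-- The closed linear span of a subset of a topological `ℂ`-module. -/
noncomputable def clSpan {M : Type*} [AddCommMonoid M] [Module ℂ M] [TopologicalSpace M]
    (S : Set M) : Set M :=
  closure (Submodule.span ℂ S : Set M)

/-- A subset is a (complex) linear subspace. -/
def IsLinearSubspace {M : Type*} [AddCommMonoid M] [Module ℂ M] (K : Set M) : Prop :=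
  (0 : M) ∈ K ∧ (∀ x ∈ K, ∀ y ∈ K, x + y ∈ K) ∧ ∀ (c : ℂ), ∀ x ∈ K, c • x ∈ K

/-- A closed two-sided ideal of a C*-algebra `B`. -/
structure IsClosedTwoSidedIdeal {B : Type*} [NonUnitalCStarAlgebra B] (I : Set B) : Prop where
  isClosed : IsClosed I
  subspace : IsLinearSubspace I
  mul_mem_left : ∀ (b : B), ∀ a ∈ I, b * a ∈ I
  mul_mem_right : ∀ (b : B), ∀ a ∈ I, a * b ∈ I

/-- The Hilbert C⋆-module class as Mathlib stated it in December 2024 (right `A`-action through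
`Aᵐᵒᵖ`); Mathlib's current `CStarModule` uses a left action instead. -/
class CStarModuleRight (A E : Type*) [NonUnitalSemiring A] [StarRing A]
    [Module ℂ A] [AddCommGroup E] [Module ℂ E] [PartialOrder A] [SMul Aᵐᵒᵖ E] [Norm A] [Norm E]
    extends Inner A E where
  inner_add_right {x} {y} {z} : inner x (y + z) = inner x y + inner x z
  inner_self_nonneg {x} : 0 ≤ inner x x
  inner_self {x} : inner x x = 0 ↔ x = 0
  inner_op_smul_right {a : A} {x y : E} : inner x (y <• a) = inner x y * a
  inner_smul_right_complex {z : ℂ} {x} {y} : inner x (z • y) = z • inner x y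
  star_inner x y : star (inner x y) = inner y x
  norm_eq_sqrt_norm_inner_self x : ‖x‖ = √‖inner x x‖

section HilbertModule

variable (B : Type*) [NonUnitalCStarAlgebra B] [PartialOrder B] [StarOrderedRing B]
variable {E : Type*} [NormedAddCommGroup E] [NormedSpace ℂ E] [SMul Bᵐᵒᵖ E] [CStarModuleRight B E]

/-- `K ⊆ E` is an *ideal submodule* if it is the closed linear span of
`{x <• i : x ∈ E, i ∈ I}` for some closed two-sided ideal `I` of `B`. -/
def IsIdealSubmodule (K : Set E) : Prop :=
  ∃ I : Set B, IsClosedTwoSidedIdeal I ∧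
    K = clSpan {z : E | ∃ x : E, ∃ i ∈ I, z = x <• i}

/-- A *ternary ideal* of a Hilbert `B`-module `E`: a linear subspace `K` with
`x <• ⟪k, y⟫ ∈ K` for all `x y ∈ E` and `k ∈ K`. -/
def IsTernaryIdeal (K : Set E) : Prop :=
  IsLinearSubspace K ∧ ∀ (x y : E), ∀ k ∈ K, x <• (inner B k y : B) ∈ K

/-- `B_S`: the closed linear span in `B` of all inner products of elements of `S`. -/
noncomputable def rangeIdeal (S : Set E) : Set B :=
  clSpan {b : B | ∃ k ∈ S, ∃ k' ∈ S, b = (inner B k k' : B)}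

/-- The orthogonal complement of a subset of a Hilbert `B`-module. -/
def perp (S : Set E) : Set E :=
  {x : E | ∀ s ∈ S, (inner B x s : B) = 0}

end HilbertModule

section CSRHelpers
namespace CSR
variable {A E : Type*} [NonUnitalCStarAlgebra A] [PartialOrder A] [StarOrderedRing A]
variable [NormedAddCommGroup E] [NormedSpace ℂ E] [SMul Aᵐᵒᵖ E] [CStarModuleRight A E]

lemma inner_self_nonneg {x : E} : 0 ≤ inner A x x := CStarModuleRight.inner_self_nonneg
lemma inner_self {x : E} : inner A x x = 0 ↔ x = 0 := CStarModuleRight.inner_self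
@[simp] lemma inner_op_smul_right {a : A} {x y : E} : inner A x (y <• a) = inner A x y * a :=
  CStarModuleRight.inner_op_smul_right
@[simp] lemma star_inner (x y : E) : star (inner A x y) = inner A y x :=
  CStarModuleRight.star_inner x y
lemma norm_eq_sqrt_norm_inner_self (x : E) : ‖x‖ = √‖inner A x x‖ :=
  CStarModuleRight.norm_eq_sqrt_norm_inner_self x
@[simp] lemma inner_sub_right {x y z : E} : inner A x (y - z) = inner A x y - inner A x z :=
  map_sub (AddMonoidHom.mk' (fun y => inner A x y) (fun _ _ => CStarModuleRight.inner_add_right)) y z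
@[simp] lemma inner_zero_right {x : E} : inner A x (0 : E) = 0 := by
  simpa using (inner_sub_right (A := A) (x := x) (y := (0 : E)) (z := 0))
@[simp] lemma inner_sub_left {x y z : E} : inner A (x - y) z = inner A x z - inner A y z := by
  rw [← star_inner z, inner_sub_right, star_sub, star_inner, star_inner]
@[simp] lemma inner_op_smul_left {a : A} {x y : E} : inner A (x <• a) y = star a * inner A x y := by
  rw [← star_inner y, inner_op_smul_right, star_mul, star_inner]
@[simp] lemma inner_smul_right_complex {z : ℂ} {x y : E} : inner A x (z • y) = z • inner A x y :=
  CStarModuleRight.inner_smul_right_complex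
@[simp] lemma inner_smul_left_complex {z : ℂ} {x y : E} :
    inner A (z • x) y = star z • inner A x y := by
  rw [← star_inner y, inner_smul_right_complex, star_smul, star_inner]
lemma norm_sq_eq {x : E} : ‖x‖ ^ 2 = ‖inner A x x‖ := by
  rw [norm_eq_sqrt_norm_inner_self (A := A), Real.sq_sqrt (norm_nonneg _)]

lemma inner_swap_mul_le {x y : E} : inner A y x * inner A x y ≤ ‖x‖ ^ 2 • inner A y y := by
  rcases eq_or_ne x 0 with h | h
  · subst h
    have h0 : inner A y (0 : E) = 0 := inner_zero_right
    simp [h0]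
  · set r : ℝ := ‖x‖ ^ 2 with hr_def
    have hr : 0 < r := by have := norm_pos_iff.mpr h; positivity
    set a := inner A x y with ha_def
    have hb : star a = inner A y x := star_inner x y
    have key : (0:A) ≤ inner A (x <• a - (r:ℂ) • y) (x <• a - (r:ℂ) • y) := inner_self_nonneg
    have hexp : inner A (x <• a - (r:ℂ) • y) (x <• a - (r:ℂ) • y)
        = star a * inner A x x * a - r • (star a * a) - r • (star a * a)
          + r • (r • inner A y y) := by
      simp only [inner_sub_left, inner_sub_right, inner_op_smul_left, inner_op_smul_right,
        inner_smul_left_complex, inner_smul_right_complex, Complex.star_def, Complex.conj_ofReal,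
        mul_smul_comm, smul_mul_assoc, ← ha_def, ← hb, mul_assoc, sub_mul, mul_sub, smul_sub]
      simp only [Complex.coe_smul]
      abel
    have hle : star a * inner A x x * a ≤ r • (star a * a) := by
      have := CStarAlgebra.star_left_conjugate_le_norm_smul (a := a) (b := inner A x x)
        (star_inner x x)
      rwa [hr_def, norm_sq_eq (A := A)]
    have h2 := key
    rw [hexp] at h2
    have h3 : (0:A) ≤ r • (star a * a) - r • (star a * a) - r • (star a * a)
        + r • (r • inner A y y) := le_trans h2 (by gcongr)
    have e : r • (star a * a) - r • (star a * a) - r • (star a * a) + r • (r • inner A y y)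
        = r • (r • inner A y y - star a * a) := by
      rw [smul_sub]; abel
    rw [e] at h3
    have h4 : r • (0:A) ≤ r • (r • inner A y y - star a * a) := by rwa [smul_zero]
    have h5 := sub_nonneg.mp ((smul_le_smul_iff_of_pos_left hr).mp h4)
    rwa [hb] at h5

variable (E) in
lemma norm_inner_le {x y : E} : ‖inner A x y‖ ≤ ‖x‖ * ‖y‖ := by
  have h1 : ‖inner A x y‖ ^ 2 = ‖inner A y x * inner A x y‖ := by
    rw [← star_inner x y, CStarRing.norm_star_mul_self, pow_two]
  have h2 : ‖inner A y x * inner A x y‖ ≤ ‖x‖ ^ 2 * ‖y‖ ^ 2 := by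
    calc _ ≤ ‖‖x‖ ^ 2 • inner A y y‖ :=
          CStarAlgebra.norm_le_norm_of_nonneg_of_le
            (by rw [← star_inner x y]; exact star_mul_self_nonneg _) inner_swap_mul_le
      _ = ‖x‖ ^ 2 * ‖y‖ ^ 2 := by
          rw [norm_smul, norm_sq_eq (A := A) (x := y), Real.norm_of_nonneg (by positivity)]
  exact (pow_le_pow_iff_left₀ (norm_nonneg _) (by positivity) two_ne_zero).mp
    (by rw [h1, mul_pow]; exact h2)

end CSR
end CSRHelpers

section Helpers
variable {B : Type*} [NonUnitalCStarAlgebra B] [PartialOrder B] [StarOrderedRing B]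
variable {E : Type*} [NormedAddCommGroup E] [NormedSpace ℂ E] [SMul Bᵐᵒᵖ E] [CStarModuleRight B E]

lemma my_ext {u v : E} (h : ∀ w : E, (inner B w u : B) = inner B w v) : u = v := by
  have h0 : (inner B (u - v) (u - v) : B) = 0 := by
    rw [CSR.inner_sub_right, h (u - v), sub_self]
  exact sub_eq_zero.mp (CSR.inner_self.mp h0)

lemma my_smul_mul (x : E) (b c : B) : x <• (b * c) = (x <• b) <• c := by
  refine my_ext (B := B) fun w => ?_
  simp only [CSR.inner_op_smul_right, mul_assoc]

lemma my_smul_sub (x : E) (b c : B) : x <• (b - c) = x <• b - x <• c := by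
  refine my_ext (B := B) fun w => ?_
  simp only [CSR.inner_op_smul_right, CSR.inner_sub_right, mul_sub]

lemma my_sub_smul (u v : E) (b : B) : (u - v) <• b = u <• b - v <• b := by
  refine my_ext (B := B) fun w => ?_
  simp only [CSR.inner_op_smul_right, CSR.inner_sub_right, sub_mul]

lemma my_norm_smul_le (x : E) (b : B) : ‖x <• b‖ ≤ ‖x‖ * ‖b‖ := by
  rw [CSR.norm_eq_sqrt_norm_inner_self (A := B)]
  have h1 : (inner B (x <• b) (x <• b) : B) = star b * inner B x x * b := by
    simp [mul_assoc]
  rw [h1]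
  calc √‖star b * (inner B x x : B) * b‖ ≤ √(‖b‖ * ‖(inner B x x : B)‖ * ‖b‖) := by
        apply Real.sqrt_le_sqrt
        calc ‖star b * (inner B x x : B) * b‖ ≤ ‖star b * (inner B x x : B)‖ * ‖b‖ := norm_mul_le _ _
          _ ≤ ‖star b‖ * ‖(inner B x x : B)‖ * ‖b‖ := by gcongr; exact norm_mul_le _ _
          _ = ‖b‖ * ‖(inner B x x : B)‖ * ‖b‖ := by rw [norm_star]
    _ = ‖x‖ * ‖b‖ := by
        rw [show ‖b‖ * ‖(inner B x x : B)‖ * ‖b‖ = ‖(inner B x x : B)‖ * (‖b‖*‖b‖) by ring,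
          Real.sqrt_mul (norm_nonneg _), Real.sqrt_mul_self (norm_nonneg _),
          ← CSR.norm_sq_eq (A := B), Real.sqrt_sq (norm_nonneg _)]

end Helpers
open scoped RightActions

section CfcHelpers
variable {B : Type*} [NonUnitalCStarAlgebra B] [PartialOrder B] [StarOrderedRing B]

/-- auxiliary element. -/
noncomputable def myD (a : B) (ε : ℝ) : B := cfcₙ (fun t : ℝ => t / (t ^ 2 + ε)) a

lemma myD_cont {ε : ℝ} (hε : 0 < ε) : Continuous (fun t : ℝ => t / (t ^ 2 + ε)) := by
  apply Continuous.div (by fun_prop) (by fun_prop)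
  intro t; positivity

lemma myC_eq {a : B} (ha : 0 ≤ a) {ε : ℝ} (hε : 0 < ε) :
    a * myD a ε = cfcₙ (fun t : ℝ => t ^ 2 / (t ^ 2 + ε)) a := by
  have hsa : IsSelfAdjoint a := ha.isSelfAdjoint
  rw [myD]
  rw [show a * cfcₙ (fun t : ℝ => t / (t ^ 2 + ε)) a
      = cfcₙ (fun t : ℝ => t) a * cfcₙ (fun t : ℝ => t / (t ^ 2 + ε)) a by rw [cfcₙ_id' ℝ a],
    ← cfcₙ_mul _ _ a (by fun_prop) (by simp) ((myD_cont hε).continuousOn) (by simp [hε.ne'])]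
  apply cfcₙ_congr
  intro t _
  field_simp

lemma myC_eq' {a : B} (ha : 0 ≤ a) {ε : ℝ} (hε : 0 < ε) :
    myD a ε * a = cfcₙ (fun t : ℝ => t ^ 2 / (t ^ 2 + ε)) a := by
  have hsa : IsSelfAdjoint a := ha.isSelfAdjoint
  rw [myD]
  rw [show cfcₙ (fun t : ℝ => t / (t ^ 2 + ε)) a * a
      = cfcₙ (fun t : ℝ => t / (t ^ 2 + ε)) a * cfcₙ (fun t : ℝ => t) a by rw [cfcₙ_id' ℝ a],
    ← cfcₙ_mul _ _ a ((myD_cont hε).continuousOn) (by simp [hε.ne']) (by fun_prop) (by simp)]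
  apply cfcₙ_congr
  intro t _
  field_simp

lemma myC_star {a : B} (ha : 0 ≤ a) {ε : ℝ} (hε : 0 < ε) :
    star (a * myD a ε) = a * myD a ε := by
  have hsa : IsSelfAdjoint a := ha.isSelfAdjoint
  rw [myC_eq ha hε]
  exact cfcₙ_predicate (fun t : ℝ => t ^ 2 / (t ^ 2 + ε)) a

lemma scalar_bound {ε : ℝ} (hε : 0 < ε) (t : ℝ) :
    |t - t * (t ^ 2 / (t ^ 2 + ε)) - (t ^ 2 / (t ^ 2 + ε)) * t
      + (t ^ 2 / (t ^ 2 + ε)) * t * (t ^ 2 / (t ^ 2 + ε))| ≤ Real.sqrt ε := by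
  have hd : (0:ℝ) < t ^ 2 + ε := by positivity
  set s := Real.sqrt ε with hs
  have hs0 : 0 < s := Real.sqrt_pos.mpr hε
  have hs2 : s ^ 2 = ε := Real.sq_sqrt hε.le
  have key : t - t * (t ^ 2 / (t ^ 2 + ε)) - (t ^ 2 / (t ^ 2 + ε)) * t
      + (t ^ 2 / (t ^ 2 + ε)) * t * (t ^ 2 / (t ^ 2 + ε))
      = t * ε ^ 2 / (t ^ 2 + ε) ^ 2 := by
    field_simp
    ring
  rw [key, abs_div, abs_of_pos (show (0:ℝ) < (t ^ 2 + ε) ^ 2 by positivity),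
    div_le_iff₀ (show (0:ℝ) < (t ^ 2 + ε) ^ 2 by positivity), abs_mul,
    abs_of_pos (show (0:ℝ) < ε ^ 2 by positivity)]
  have e1 : |t| * ε ≤ (s / 2) * (t ^ 2 + ε) := by
    nlinarith [sq_nonneg (|t| - s), sq_abs t]
  nlinarith [sq_nonneg (t ^ 2 + ε), abs_nonneg t, mul_le_mul_of_nonneg_right e1 hε.le,
    mul_le_mul_of_nonneg_left (le_add_of_nonneg_left (sq_nonneg t) : ε ≤ t ^ 2 + ε)
      (mul_nonneg (by positivity : (0:ℝ) ≤ s / 2) hd.le)]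

lemma myC_norm_bound {a : B} (ha : 0 ≤ a) {ε : ℝ} (hε : 0 < ε) :
    ‖a - a * (a * myD a ε) - (a * myD a ε) * a + (a * myD a ε) * (a * (a * myD a ε))‖
      ≤ Real.sqrt ε := by
  have hsa : IsSelfAdjoint a := ha.isSelfAdjoint
  have hfc : ContinuousOn (fun t : ℝ => t ^ 2 / (t ^ 2 + ε)) (quasispectrum ℝ a) := by
    apply Continuous.continuousOn
    apply Continuous.div (by fun_prop) (by fun_prop)
    intro t; positivity
  have hf0 : (fun t : ℝ => t ^ 2 / (t ^ 2 + ε)) 0 = 0 := by simp [hε.ne']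
  have h1 : a - a * (a * myD a ε) - (a * myD a ε) * a + (a * myD a ε) * (a * (a * myD a ε))
      = cfcₙ (fun t : ℝ => t - t * (t ^ 2 / (t ^ 2 + ε)) - (t ^ 2 / (t ^ 2 + ε)) * t
          + (t ^ 2 / (t ^ 2 + ε)) * t * (t ^ 2 / (t ^ 2 + ε))) a := by
    rw [cfcₙ_add _ _ a, cfcₙ_sub _ _ a, cfcₙ_sub _ _ a, cfcₙ_mul _ _ a, cfcₙ_mul _ _ a,
      cfcₙ_mul _ _ a, cfcₙ_mul _ _ a, cfcₙ_id' ℝ a, myC_eq ha hε]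
    simp [mul_assoc]
  rw [h1]
  exact norm_cfcₙ_le fun t _ => scalar_bound hε t
end CfcHelpers

section MainHelpers
variable {B : Type*} [NonUnitalCStarAlgebra B] [PartialOrder B] [StarOrderedRing B]
variable {E : Type*} [NormedAddCommGroup E] [NormedSpace ℂ E] [SMul Bᵐᵒᵖ E] [CStarModuleRight B E]

/-- The approximate-unit convergence: `k <• cₙ → k` in norm. -/
lemma my_approx (k : E) :
    Filter.Tendsto
      (fun n : ℕ => ‖k <• ((inner B k k : B) * myD (inner B k k : B) (1 / (n + 1))) - k‖)
      Filter.atTop (nhds 0) := by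
  set a : B := inner B k k with ha_def
  have ha : 0 ≤ a := CSR.inner_self_nonneg
  have hbound : ∀ n : ℕ, ‖k <• (a * myD a (1 / (n + 1))) - k‖
      ≤ Real.sqrt (Real.sqrt (1 / (n + 1))) := by
    intro n
    have hε : (0:ℝ) < 1 / (n + 1) := by positivity
    set c : B := a * myD a (1 / (n + 1)) with hc_def
    have hstar : star c = c := myC_star ha hε
    have hinner : (inner B (k <• c - k) (k <• c - k) : B)
        = a - a * c - c * a + c * (a * c) := by
      simp only [CSR.inner_sub_left, CSR.inner_sub_right,
        CSR.inner_op_smul_left, CSR.inner_op_smul_right, hstar, ← ha_def]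
      noncomm_ring
    have hnorm2 : ‖k <• c - k‖ ^ 2 ≤ Real.sqrt (1 / (n + 1)) := by
      rw [CSR.norm_sq_eq (A := B), hinner]
      have := myC_norm_bound ha hε
      calc ‖a - a * c - c * a + c * (a * c)‖
          = ‖a - a * (a * myD a (1/(n+1))) - (a * myD a (1/(n+1))) * a
            + (a * myD a (1/(n+1))) * (a * (a * myD a (1/(n+1))))‖ := by rw [← hc_def]
        _ ≤ Real.sqrt (1 / (n + 1)) := myC_norm_bound ha hε
    calc ‖k <• c - k‖ = Real.sqrt (‖k <• c - k‖ ^ 2) := by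
          rw [Real.sqrt_sq (norm_nonneg _)]
      _ ≤ Real.sqrt (Real.sqrt (1 / (n + 1))) := Real.sqrt_le_sqrt hnorm2
  have htend : Filter.Tendsto (fun n : ℕ => Real.sqrt (Real.sqrt (1 / (n + 1))))
      Filter.atTop (nhds 0) := by
    have h0 : Filter.Tendsto (fun n : ℕ => 1 / ((n:ℝ) + 1)) Filter.atTop (nhds 0) :=
      tendsto_one_div_add_atTop_nhds_zero_nat
    have hs : Filter.Tendsto (fun x : ℝ => Real.sqrt (Real.sqrt x)) (nhds 0) (nhds 0) := by
      have := (Real.continuous_sqrt.comp Real.continuous_sqrt).tendsto 0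
      simpa [Function.comp_def] using this
    exact hs.comp h0
  exact squeeze_zero (fun n => norm_nonneg _) hbound htend

end MainHelpers

/-- a closed ternary ideal `K` satisfies `E⟨E,K⟩ ⊆ K` and `K⟨E,E⟩ ⊆ K`. -/
theorem closed_ternaryIdeal_absorbs
    {B : Type*} [NonUnitalCStarAlgebra B] [PartialOrder B] [StarOrderedRing B]
    {E : Type*} [NormedAddCommGroup E] [NormedSpace ℂ E] [SMul Bᵐᵒᵖ E]
    [CStarModuleRight B E] [CompleteSpace E] (K : Set E) (hcl : IsClosed K) (hK : IsTernaryIdeal B K) :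
    (∀ (x y : E), ∀ k ∈ K, x <• (inner B y k : B) ∈ K) ∧
    (∀ (x y : E), ∀ k ∈ K, k <• (inner B x y : B) ∈ K) := by
  obtain ⟨hsub, hT⟩ := hK
  constructor
  · intro x y k hk
    set a : B := inner B k k with ha_def
    have ha : 0 ≤ a := CSR.inner_self_nonneg
    set b : B := inner B y k with hb_def
    -- membership of the approximants
    have hmem : ∀ n : ℕ, x <• (b * (a * myD a (1 / (n + 1)))) ∈ K := by
      intro n
      have hε : (0:ℝ) < 1 / (n + 1) := by positivity
      have h1 : b * (a * myD a (1 / (n + 1))) = (b * myD a (1 / (n + 1))) * a := by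
        rw [myC_eq ha hε, ← myC_eq' ha hε, ← mul_assoc]
      rw [h1, my_smul_mul]
      exact hT _ k k hk
    -- convergence of the approximants
    have htend : Filter.Tendsto (fun n : ℕ => x <• (b * (a * myD a (1 / (n + 1)))))
        Filter.atTop (nhds (x <• b)) := by
      rw [tendsto_iff_norm_sub_tendsto_zero]
      have hb2 : ∀ n : ℕ, ‖x <• (b * (a * myD a (1 / (n + 1)))) - x <• b‖
          ≤ ‖x‖ * (‖y‖ * ‖k <• (a * myD a (1 / (n + 1))) - k‖) := by
        intro n
        set c : B := a * myD a (1 / (n + 1)) with hc_def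
        have h2 : x <• (b * c) - x <• b = x <• (b * c - b) := (my_smul_sub x (b * c) b).symm
        have h3 : b * c - b = inner B y (k <• c - k) := by
          rw [CSR.inner_sub_right, CSR.inner_op_smul_right, ← hb_def]
        calc ‖x <• (b * c) - x <• b‖ = ‖x <• (b * c - b)‖ := by rw [h2]
          _ ≤ ‖x‖ * ‖b * c - b‖ := my_norm_smul_le x _
          _ = ‖x‖ * ‖(inner B y (k <• c - k) : B)‖ := by rw [h3]
          _ ≤ ‖x‖ * (‖y‖ * ‖k <• c - k‖) := by
              gcongr
              exact CSR.norm_inner_le E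
      have := my_approx (B := B) k
      have hmul : Filter.Tendsto
          (fun n : ℕ => ‖x‖ * (‖y‖ * ‖k <• (a * myD a (1 / (n + 1))) - k‖))
          Filter.atTop (nhds 0) := by
        have := ((my_approx (B := B) k).const_mul ‖y‖).const_mul ‖x‖
        simpa using this
      exact squeeze_zero (fun n => norm_nonneg _) hb2 hmul
    exact hcl.mem_of_tendsto htend (Filter.Eventually.of_forall hmem)
  · intro x y k hk
    set a : B := inner B k k with ha_def
    have ha : 0 ≤ a := CSR.inner_self_nonneg
    set b : B := inner B x y with hb_def
    have hmem : ∀ n : ℕ, k <• ((a * myD a (1 / (n + 1))) * b) ∈ K := by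
      intro n
      have h1 : (a * myD a (1 / (n + 1))) * b = inner B k (k <• (myD a (1 / (n + 1)) * b)) := by
        rw [CSR.inner_op_smul_right, ← ha_def, ← mul_assoc]
      rw [h1]
      exact hT k _ k hk
    have htend : Filter.Tendsto (fun n : ℕ => k <• ((a * myD a (1 / (n + 1))) * b))
        Filter.atTop (nhds (k <• b)) := by
      rw [tendsto_iff_norm_sub_tendsto_zero]
      have hb2 : ∀ n : ℕ, ‖k <• ((a * myD a (1 / (n + 1))) * b) - k <• b‖
          ≤ ‖k <• (a * myD a (1 / (n + 1))) - k‖ * ‖b‖ := by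
        intro n
        set c : B := a * myD a (1 / (n + 1)) with hc_def
        calc ‖k <• (c * b) - k <• b‖ = ‖(k <• c) <• b - k <• b‖ := by rw [my_smul_mul]
          _ = ‖(k <• c - k) <• b‖ := by rw [my_sub_smul]
          _ ≤ ‖k <• c - k‖ * ‖b‖ := my_norm_smul_le _ _
      have hmul : Filter.Tendsto
          (fun n : ℕ => ‖k <• (a * myD a (1 / (n + 1))) - k‖ * ‖b‖)
          Filter.atTop (nhds 0) := by
        have := (my_approx (B := B) k).mul_const ‖b‖
        simpa using this
      exact squeeze_zero (fun n => norm_nonneg _) hb2 hmul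
    exact hcl.mem_of_tendsto htend (Filter.Eventually.of_forall hmem)
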